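/- Assume σ⁰,σ¹,…,σᵈ : ℝⁿ → ℝⁿ are Lipschitz continuous. Then for every p ≥ 1 and every N ∈ ℕ*, the Runge–Kutta discretized Ninomiya–Victoir scheme has finite moments: max over 0 ≤ k ≤ N−1 and 1 ≤ j ≤ d+2 of E[‖X̂^{NV,η}_{t_{k+j/(d+2)}}‖^{2p}] < ∞. -/

import Mathlib

open MeasureTheory ProbabilityTheory

noncomputable section

/-- Euclidean space ℝⁿ. -/
abbrev Vec (n : ℕ) : Type := EuclideanSpace ℝ (Fin n)

/-- Explicit second-order Runge–Kutta map `Ψ₂^V`. -/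
def rk2 {n : ℕ} (V : Vec n → Vec n) (θ : ℝ) (x : Vec n) : Vec n :=
  x + (θ / 2) • V x + (θ / 2) • V (x + θ • V x)

/-- Classical fourth-order Runge–Kutta map `Ψ₄^V`. -/
def rk4 {n : ℕ} (V : Vec n → Vec n) (θ : ℝ) (x : Vec n) : Vec n :=
  x + (θ / 6) • (V x + (2 : ℝ) • V (x + (θ / 2) • V x)
    + (2 : ℝ) • V (x + (θ / 2) • V (x + (θ / 2) • V x))
    + V (x + θ • V (x + (θ / 2) • V (x + (θ / 2) • V x))))

/-- `φ` is the flow of the vector field `V` : `φ θ x = exp(θV)x`. -/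
def IsFlow {n : ℕ} (V : Vec n → Vec n) (φ : ℝ → Vec n → Vec n) : Prop :=
  (∀ x, φ 0 x = x) ∧ ∀ (x : Vec n) (t : ℝ), HasDerivAt (fun s => φ s x) (V (φ t x)) t

/-- Intermediate values of one step of a Ninomiya–Victoir-type scheme built
from the one-parameter maps `ψ0` (drift) and `ψ j`, `1 ≤ j ≤ d` (Brownian). -/
def nvSub {n : ℕ} (d : ℕ) (ψ0 : ℝ → Vec n → Vec n) (ψ : ℕ → ℝ → Vec n → Vec n)
    (h : ℝ) (w : ℕ → ℝ) (s : ℝ) (x : Vec n) : ℕ → Vec n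
  | 0 => x
  | j + 1 =>
      if j = 0 then ψ0 (h / 2) x
      else if j ≤ d then
        (if s = 1 then ψ j (w j) else ψ (d + 1 - j) (w (d + 1 - j)))
          (nvSub d ψ0 ψ h w s x j)
      else ψ0 (h / 2) (nvSub d ψ0 ψ h w s x j)

/-- Grid values of the Ninomiya–Victoir-type scheme with increments `W` and
signs `s` (value after `k` steps of size `h`). -/
def nvGrid {n : ℕ} (d : ℕ) (ψ0 : ℝ → Vec n → Vec n) (ψ : ℕ → ℝ → Vec n → Vec n)
    (h : ℝ) (W : ℕ → ℕ → ℝ) (s : ℕ → ℝ) (x0 : Vec n) : ℕ → Vec n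
  | 0 => x0
  | k + 1 => nvSub d ψ0 ψ h (W k) (s k) (nvGrid d ψ0 ψ h W s x0 k) (d + 2)

/-- Rademacher law on ℝ (uniform on {−1,1}). -/
def radMeasure : Measure ℝ :=
  ((2 : ENNReal)⁻¹ • Measure.dirac (1 : ℝ)) + ((2 : ENNReal)⁻¹ • Measure.dirac (-1 : ℝ))

open Real
open scoped NNReal ENNReal

lemma growth_step {n : ℕ} (V : Vec n → Vec n) {B a u K c : ℝ} (x z : Vec n)
    (hV : ∀ y, ‖V y‖ ≤ B * (1 + ‖y‖)) (hB : 1 ≤ B) (ha : 0 ≤ a) (hK : 1 ≤ K) (hu : 1 ≤ u)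
    (hc : |c| ≤ a) (hx : 1 + ‖x‖ ≤ u) (hz : 1 + ‖z‖ ≤ K * u) :
    1 + ‖x + c • V z‖ ≤ B * (1 + a) * K * u := by
  have h1 : ‖V z‖ ≤ B * (K * u) := le_trans (hV z) (by nlinarith [norm_nonneg z])
  have h2 : ‖x + c • V z‖ ≤ ‖x‖ + |c| * ‖V z‖ := by
    calc ‖x + c • V z‖ ≤ ‖x‖ + ‖c • V z‖ := norm_add_le _ _
    _ = ‖x‖ + |c| * ‖V z‖ := by rw [norm_smul, Real.norm_eq_abs]
  have h3 : |c| * ‖V z‖ ≤ a * (B * (K * u)) :=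
    mul_le_mul hc h1 (norm_nonneg _) ha
  nlinarith [norm_nonneg x, mul_le_mul hB hK zero_le_one (by linarith : (0:ℝ) ≤ B)]


lemma final_comb {n : ℕ} (x y1 y2 y3 y4 : Vec n) (θ C : ℝ) (hC : 0 ≤ C)
    (h1 : ‖y1‖ ≤ C) (h2 : ‖y2‖ ≤ C) (h3 : ‖y3‖ ≤ C) (h4 : ‖y4‖ ≤ C) :
    ‖x + (θ/6) • (y1 + (2:ℝ) • y2 + (2:ℝ) • y3 + y4)‖ ≤ ‖x‖ + |θ| * C := by
  have hs1 : ‖y1 + (2:ℝ) • y2 + (2:ℝ) • y3 + y4‖ ≤ 6 * C := by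
    have n1 := norm_add_le (y1 + (2:ℝ) • y2 + (2:ℝ) • y3) y4
    have n2 := norm_add_le (y1 + (2:ℝ) • y2) ((2:ℝ) • y3)
    have n3 := norm_add_le y1 ((2:ℝ) • y2)
    have e2 : ‖(2:ℝ) • y2‖ = 2 * ‖y2‖ := by rw [norm_smul]; norm_num
    have e3 : ‖(2:ℝ) • y3‖ = 2 * ‖y3‖ := by rw [norm_smul]; norm_num
    rw [e2] at n3; rw [e3] at n2
    linarith
  calc ‖x + (θ/6) • (y1 + (2:ℝ) • y2 + (2:ℝ) • y3 + y4)‖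
      ≤ ‖x‖ + ‖(θ/6) • (y1 + (2:ℝ) • y2 + (2:ℝ) • y3 + y4)‖ := norm_add_le _ _
    _ = ‖x‖ + |θ/6| * ‖y1 + (2:ℝ) • y2 + (2:ℝ) • y3 + y4‖ := by
        rw [norm_smul, Real.norm_eq_abs]
    _ ≤ ‖x‖ + |θ/6| * (6 * C) := by
        have h6 : (0:ℝ) ≤ |θ/6| := abs_nonneg _
        nlinarith
    _ = ‖x‖ + |θ| * C := by rw [abs_div]; norm_num; ring


lemma rk4_bound {n : ℕ} {V : Vec n → Vec n} {B : ℝ} (hB : 1 ≤ B)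
    (hV : ∀ y, ‖V y‖ ≤ B * (1 + ‖y‖)) (θ : ℝ) (x : Vec n) :
    1 + ‖rk4 V θ x‖ ≤ (B * (1 + |θ|)) ^ 4 * (1 + ‖x‖) := by
  set a := |θ| with hadef
  have ha : 0 ≤ a := abs_nonneg θ
  set u := 1 + ‖x‖ with hudef
  set m := B * (1 + a) with hmdef
  clear_value a u m
  have hu : 1 ≤ u := by rw [hudef]; linarith [norm_nonneg x]
  have hm : 1 ≤ m := by rw [hmdef]; nlinarith
  have hm0 : 0 ≤ m := by linarith
  have hc2 : |θ / 2| ≤ a := by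
    rw [abs_div, abs_two, hadef]; linarith [abs_nonneg θ]
  have hcθ : |θ| ≤ a := le_of_eq hadef.symm
  have hxu : 1 + ‖x‖ ≤ u := le_of_eq hudef.symm
  -- x2 = x + (θ/2) • V x
  have hx2 : 1 + ‖x + (θ/2) • V x‖ ≤ m * 1 * u := by
    simpa [hmdef] using growth_step V x x hV hB ha le_rfl hu hc2 hxu
      (by rw [one_mul]; exact hxu)
  have hx2' : 1 + ‖x + (θ/2) • V x‖ ≤ m * u := by simpa using hx2
  -- x3 = x + (θ/2) • V x2
  have hx3 : 1 + ‖x + (θ/2) • V (x + (θ/2) • V x)‖ ≤ m * m * u := by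
    have := growth_step V x (x + (θ/2) • V x) hV hB ha hm hu hc2 hxu hx2'
    simpa [hmdef, mul_assoc] using this
  have hx3' : 1 + ‖x + (θ/2) • V (x + (θ/2) • V x)‖ ≤ (m * m) * u := hx3
  -- x4 = x + θ • V x3
  have hmm : 1 ≤ m * m := one_le_mul_of_one_le_of_one_le hm hm
  have hx4 : 1 + ‖x + θ • V (x + (θ/2) • V (x + (θ/2) • V x))‖ ≤ m * (m * m) * u := by
    have := growth_step V x (x + (θ/2) • V (x + (θ/2) • V x)) hV hB ha hmm hu hcθ hxu hx3'
    calc 1 + ‖x + θ • V (x + (θ/2) • V (x + (θ/2) • V x))‖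
        ≤ B * (1 + a) * (m * m) * u := this
      _ = m * (m * m) * u := by rw [hmdef]
  -- final combination
  have hu0 : (0:ℝ) ≤ u := by linarith
  have hB0 : (0:ℝ) ≤ B := by linarith
  have hM : 1 ≤ m * (m * m) := one_le_mul_of_one_le_of_one_le hm hmm
  have hC : (0:ℝ) ≤ B * ((m * (m * m)) * u) := by positivity
  have hk1b : ‖V x‖ ≤ B * ((m * (m * m)) * u) := by
    have h0 : ‖V x‖ ≤ B * u := by
      have := hV x; rw [← hudef] at this; exact this
    exact h0.trans (mul_le_mul_of_nonneg_left (le_mul_of_one_le_left hu0 hM) hB0)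
  have hk2b : ‖V (x + (θ/2) • V x)‖ ≤ B * ((m * (m * m)) * u) := by
    have h0 := (hV _).trans (mul_le_mul_of_nonneg_left hx2' hB0)
    refine h0.trans (mul_le_mul_of_nonneg_left (mul_le_mul_of_nonneg_right ?_ hu0) hB0)
    exact le_mul_of_one_le_right hm0 hmm
  have hk3b : ‖V (x + (θ/2) • V (x + (θ/2) • V x))‖ ≤ B * ((m * (m * m)) * u) := by
    have h0 := (hV _).trans (mul_le_mul_of_nonneg_left hx3' hB0)
    refine h0.trans (mul_le_mul_of_nonneg_left (mul_le_mul_of_nonneg_right ?_ hu0) hB0)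
    exact le_mul_of_one_le_left (mul_nonneg hm0 hm0) hm
  have hk4b : ‖V (x + θ • V (x + (θ/2) • V (x + (θ/2) • V x)))‖
      ≤ B * ((m * (m * m)) * u) := by
    have h0 := (hV _).trans (mul_le_mul_of_nonneg_left hx4 hB0)
    exact h0.trans (le_of_eq (by ring))
  have hr : ‖rk4 V θ x‖ ≤ ‖x‖ + a * (B * ((m * (m * m)) * u)) := by
    rw [rk4, hadef]
    exact final_comb x _ _ _ _ θ _ hC hk1b hk2b hk3b hk4b
  have hm4 : m ^ 4 * u = B * ((m * (m * m)) * u) + a * (B * ((m * (m * m)) * u)) := by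
    rw [hmdef]; ring
  have huC : u ≤ B * ((m * (m * m)) * u) := by
    have h1 : 1 ≤ B * (m * (m * m)) := one_le_mul_of_one_le_of_one_le hB hM
    calc u = 1 * u := (one_mul u).symm
      _ ≤ (B * (m * (m * m))) * u := mul_le_mul_of_nonneg_right h1 hu0
      _ = B * ((m * (m * m)) * u) := by ring
  have hux : 1 + ‖x‖ = u := hudef.symm
  linarith


lemma rk2_bound {n : ℕ} {V : Vec n → Vec n} {B : ℝ} (hB : 1 ≤ B)
    (hV : ∀ y, ‖V y‖ ≤ B * (1 + ‖y‖)) (θ : ℝ) (x : Vec n) :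
    1 + ‖rk2 V θ x‖ ≤ (B * (1 + |θ|)) ^ 4 * (1 + ‖x‖) := by
  set a := |θ| with hadef
  have ha : 0 ≤ a := abs_nonneg θ
  set u := 1 + ‖x‖ with hudef
  set m := B * (1 + a) with hmdef
  clear_value a u m
  have hu : 1 ≤ u := by rw [hudef]; linarith [norm_nonneg x]
  have hm : 1 ≤ m := by rw [hmdef]; nlinarith
  have hB0 : (0:ℝ) ≤ B := by linarith
  have hc2 : |θ / 2| ≤ a := by
    rw [abs_div, abs_two, hadef]; linarith [abs_nonneg θ]
  have hxu : 1 + ‖x‖ ≤ u := le_of_eq hudef.symm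
  have hz : 1 + ‖x + θ • V x‖ ≤ m * u := by
    have := growth_step V x x hV hB ha le_rfl hu (le_of_eq hadef.symm) hxu
      (by rw [one_mul]; exact hxu)
    rw [hmdef]; simpa using this
  have hk1 : ‖V x‖ ≤ B * u := by
    have := hV x; rw [← hudef] at this; simpa using this
  have hk2 : ‖V (x + θ • V x)‖ ≤ B * (m * u) := (hV _).trans (mul_le_mul_of_nonneg_left hz hB0)
  have hr : ‖rk2 V θ x‖ ≤ ‖x‖ + (a/2) * ‖V x‖ + (a/2) * ‖V (x + θ • V x)‖ := by
    rw [rk2]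
    have h1 : ‖x + (θ/2) • V x + (θ/2) • V (x + θ • V x)‖
        ≤ ‖x + (θ/2) • V x‖ + ‖(θ/2) • V (x + θ • V x)‖ := norm_add_le _ _
    have h2 : ‖x + (θ/2) • V x‖ ≤ ‖x‖ + ‖(θ/2) • V x‖ := norm_add_le _ _
    have h3 : ‖(θ/2) • V x‖ = |θ/2| * ‖V x‖ := by rw [norm_smul, Real.norm_eq_abs]
    have h4 : ‖(θ/2) • V (x + θ • V x)‖ = |θ/2| * ‖V (x + θ • V x)‖ := by
      rw [norm_smul, Real.norm_eq_abs]
    have h3' : ‖(θ/2) • V x‖ = a/2 * ‖V x‖ := by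
      rw [h3, abs_div, abs_two, hadef]
    have h4' : ‖(θ/2) • V (x + θ • V x)‖ = a/2 * ‖V (x + θ • V x)‖ := by
      rw [h4, abs_div, abs_two, hadef]
    rw [h4'] at h1
    rw [h3'] at h2
    linarith
  have hu0 : (0:ℝ) ≤ u := by linarith
  have key : 1 + ‖rk2 V θ x‖ ≤ m * m * u := by
    have e1 : (a/2) * ‖V x‖ ≤ (a/2) * (B * (m * u)) := by
      refine mul_le_mul_of_nonneg_left (hk1.trans ?_) (by linarith)
      exact mul_le_mul_of_nonneg_left (le_mul_of_one_le_left hu0 hm) hB0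
    have e2 : (a/2) * ‖V (x + θ • V x)‖ ≤ (a/2) * (B * (m * u)) :=
      mul_le_mul_of_nonneg_left hk2 (by linarith)
    have f2 : u ≤ B * (m * u) := by
      have h1Bm : 1 ≤ B * m := one_le_mul_of_one_le_of_one_le hB hm
      calc u = 1 * u := (one_mul u).symm
        _ ≤ (B * m) * u := mul_le_mul_of_nonneg_right h1Bm hu0
        _ = B * (m * u) := by ring
    have f3 : m * m * u = B * (m * u) + a * (B * (m * u)) := by rw [hmdef]; ring
    have hx' : 1 + ‖x‖ = u := hudef.symm
    have e3 : a / 2 * (B * (m * u)) + a / 2 * (B * (m * u)) = a * (B * (m * u)) := by ring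
    linarith
  refine key.trans ?_
  have hmm : 1 ≤ m * m := one_le_mul_of_one_le_of_one_le hm hm
  have h4 : m * m ≤ m ^ 4 := by
    calc m * m ≤ (m * m) * (m * m) := le_mul_of_one_le_right (by nlinarith) hmm
      _ = m ^ 4 := by ring
  exact mul_le_mul_of_nonneg_right h4 hu0


lemma one_le_prod_real {ι : Type*} (s : Finset ι) (f : ι → ℝ)
    (h : ∀ i ∈ s, 1 ≤ f i) : 1 ≤ ∏ i ∈ s, f i := by
  classical
  induction s using Finset.induction_on with
  | empty => simp
  | @insert a s' ha ih =>
    rw [Finset.prod_insert ha]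
    exact one_le_mul_of_one_le_of_one_le (h a (Finset.mem_insert_self a s'))
      (ih fun i hi => h i (Finset.mem_insert_of_mem hi))


lemma single_le_prod_real {ι : Type*} (s : Finset ι) (f : ι → ℝ)
    (h : ∀ i ∈ s, 1 ≤ f i) {i : ι} (hi : i ∈ s) : f i ≤ ∏ j ∈ s, f j := by
  classical
  rw [← Finset.mul_prod_erase s f hi]
  refine le_mul_of_one_le_right (by linarith [h i hi]) ?_
  exact one_le_prod_real _ _ fun j hj => h j (Finset.mem_erase.mp hj).2

/-- The per-step dominating factor. -/
def Dfac (B h : ℝ) (d : ℕ) (w : ℕ → ℝ) : ℝ :=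
  (B * (1 + |h|)) ^ 4 * ∏ i ∈ Finset.Icc 1 d, (1 + |w i|) ^ 4

lemma one_le_Dfac {B h : ℝ} (hB : 1 ≤ B) (d : ℕ) (w : ℕ → ℝ) : 1 ≤ Dfac B h d w := by
  have h1 : 1 ≤ (B * (1 + |h|)) ^ 4 := by
    apply one_le_pow₀
    nlinarith [abs_nonneg h]
  have h2 : 1 ≤ ∏ i ∈ Finset.Icc 1 d, (1 + |w i|) ^ 4 :=
    one_le_prod_real _ _ fun i _ => one_le_pow₀ (by linarith [abs_nonneg (w i)])
  exact one_le_mul_of_one_le_of_one_le h1 h2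


lemma rk2fac_le_Dfac {B h : ℝ} (hB : 1 ≤ B) (d : ℕ) (w : ℕ → ℝ) :
    (B * (1 + |h / 2|)) ^ 4 ≤ Dfac B h d w := by
  have h1 : B * (1 + |h / 2|) ≤ B * (1 + |h|) := by
    have : |h / 2| ≤ |h| := by rw [abs_div, abs_two]; linarith [abs_nonneg h]
    nlinarith
  have h0 : 0 ≤ B * (1 + |h / 2|) := by positivity
  refine le_trans (pow_le_pow_left₀ h0 h1 4) ?_
  refine le_mul_of_one_le_right (by positivity) ?_
  exact one_le_prod_real _ _ fun i _ => one_le_pow₀ (by linarith [abs_nonneg (w i)])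


lemma rk4fac_le_Dfac {B h : ℝ} (hB : 1 ≤ B) (d : ℕ) (w : ℕ → ℝ) {i : ℕ}
    (hi : i ∈ Finset.Icc 1 d) : (B * (1 + |w i|)) ^ 4 ≤ Dfac B h d w := by
  rw [mul_pow, Dfac]
  have h1 : B ^ 4 ≤ (B * (1 + |h|)) ^ 4 := by
    apply pow_le_pow_left₀ (by linarith)
    nlinarith [abs_nonneg h]
  have h2 : (1 + |w i|) ^ 4 ≤ ∏ j ∈ Finset.Icc 1 d, (1 + |w j|) ^ 4 :=
    single_le_prod_real (Finset.Icc 1 d) (fun j => (1 + |w j|) ^ 4)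
      (fun j _ => one_le_pow₀ (by linarith [abs_nonneg (w j)])) hi
  apply mul_le_mul h1 h2 (by positivity) (by positivity)


lemma nvSub_bound {n d : ℕ} (σ : ℕ → Vec n → Vec n) {B : ℝ} (hB : 1 ≤ B)
    (hσ : ∀ j, j ≤ d → ∀ y, ‖σ j y‖ ≤ B * (1 + ‖y‖))
    (h : ℝ) (w : ℕ → ℝ) (s : ℝ) (x : Vec n) :
    ∀ j, j ≤ d + 2 → 1 + ‖nvSub d (rk2 (σ 0)) (fun i => rk4 (σ i)) h w s x j‖
      ≤ (Dfac B h d w) ^ j * (1 + ‖x‖) := by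
  have hD1 : 1 ≤ Dfac B h d w := one_le_Dfac hB d w
  have hD0 : 0 ≤ Dfac B h d w := by linarith
  intro j
  induction j with
  | zero => intro _; simp [nvSub]
  | succ j ih =>
    intro hj
    have hj' : j ≤ d + 2 := by omega
    have ihj := ih hj'
    have hx1 : (0:ℝ) ≤ 1 + ‖nvSub d (rk2 (σ 0)) (fun i => rk4 (σ i)) h w s x j‖ := by
      positivity
    by_cases hj0 : j = 0
    · subst hj0
      have heq : nvSub d (rk2 (σ 0)) (fun i => rk4 (σ i)) h w s x 1 = rk2 (σ 0) (h/2) x := by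
        conv_lhs => rw [nvSub]
        rw [if_pos rfl]
      rw [heq]
      refine le_trans (rk2_bound hB (hσ 0 (Nat.zero_le d)) (h/2) x) ?_
      rw [pow_one]
      exact mul_le_mul_of_nonneg_right (rk2fac_le_Dfac hB d w) (by positivity)
    · by_cases hjd : j ≤ d
      · have hmem1 : j ∈ Finset.Icc 1 d := Finset.mem_Icc.mpr ⟨Nat.one_le_iff_ne_zero.mpr hj0, hjd⟩
        have hmem2 : d + 1 - j ∈ Finset.Icc 1 d := Finset.mem_Icc.mpr ⟨by omega, by omega⟩
        have hle1 : d + 1 - j ≤ d := by omega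
        have heq : nvSub d (rk2 (σ 0)) (fun i => rk4 (σ i)) h w s x (j+1)
            = (if s = 1 then rk4 (σ j) (w j) else rk4 (σ (d+1-j)) (w (d+1-j)))
              (nvSub d (rk2 (σ 0)) (fun i => rk4 (σ i)) h w s x j) := by
          conv_lhs => rw [nvSub]
          rw [if_neg hj0, if_pos hjd]
        rw [heq]
        have key : ∀ (i : ℕ), i ∈ Finset.Icc 1 d →
            1 + ‖rk4 (σ i) (w i) (nvSub d (rk2 (σ 0)) (fun i => rk4 (σ i)) h w s x j)‖
              ≤ (Dfac B h d w) ^ (j+1) * (1 + ‖x‖) := by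
          intro i hi
          have hid : i ≤ d := (Finset.mem_Icc.mp hi).2
          refine le_trans (rk4_bound hB (hσ i hid) (w i) _) ?_
          calc (B * (1 + |w i|)) ^ 4 * (1 + ‖nvSub d (rk2 (σ 0)) (fun i => rk4 (σ i)) h w s x j‖)
              ≤ (Dfac B h d w) * ((Dfac B h d w) ^ j * (1 + ‖x‖)) :=
                mul_le_mul (rk4fac_le_Dfac hB d w hi) ihj hx1 hD0
            _ = (Dfac B h d w) ^ (j+1) * (1 + ‖x‖) := by ring
        split_ifs with hs
        · exact key j hmem1
        · exact key (d+1-j) hmem2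
      · have heq : nvSub d (rk2 (σ 0)) (fun i => rk4 (σ i)) h w s x (j+1)
            = rk2 (σ 0) (h/2) (nvSub d (rk2 (σ 0)) (fun i => rk4 (σ i)) h w s x j) := by
          conv_lhs => rw [nvSub]
          rw [if_neg hj0, if_neg hjd]
        rw [heq]
        refine le_trans (rk2_bound hB (hσ 0 (Nat.zero_le d)) (h/2) _) ?_
        calc (B * (1 + |h/2|)) ^ 4 * (1 + ‖nvSub d (rk2 (σ 0)) (fun i => rk4 (σ i)) h w s x j‖)
            ≤ (Dfac B h d w) * ((Dfac B h d w) ^ j * (1 + ‖x‖)) :=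
              mul_le_mul (rk2fac_le_Dfac hB d w) ihj hx1 hD0
          _ = (Dfac B h d w) ^ (j+1) * (1 + ‖x‖) := by ring


lemma nvGrid_bound {n d : ℕ} (σ : ℕ → Vec n → Vec n) {B : ℝ} (hB : 1 ≤ B)
    (hσ : ∀ j, j ≤ d → ∀ y, ‖σ j y‖ ≤ B * (1 + ‖y‖))
    (h : ℝ) (W : ℕ → ℕ → ℝ) (s : ℕ → ℝ) (x0 : Vec n) :
    ∀ k, 1 + ‖nvGrid d (rk2 (σ 0)) (fun i => rk4 (σ i)) h W s x0 k‖
      ≤ (∏ l ∈ Finset.range k, (Dfac B h d (W l)) ^ (d+2)) * (1 + ‖x0‖) := by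
  intro k
  induction k with
  | zero => simp [nvGrid]
  | succ k ih =>
    have heq : nvGrid d (rk2 (σ 0)) (fun i => rk4 (σ i)) h W s x0 (k+1)
        = nvSub d (rk2 (σ 0)) (fun i => rk4 (σ i)) h (W k) (s k)
          (nvGrid d (rk2 (σ 0)) (fun i => rk4 (σ i)) h W s x0 k) (d+2) := by
      conv_lhs => rw [nvGrid]
    rw [heq]
    refine le_trans (nvSub_bound σ hB hσ h (W k) (s k) _ (d+2) le_rfl) ?_
    rw [Finset.prod_range_succ]
    have hD0 : 0 ≤ (Dfac B h d (W k)) ^ (d+2) := by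
      have := one_le_Dfac (h := h) hB d (W k); positivity
    calc (Dfac B h d (W k)) ^ (d+2) * (1 + ‖nvGrid d (rk2 (σ 0)) (fun i => rk4 (σ i)) h W s x0 k‖)
        ≤ (Dfac B h d (W k)) ^ (d+2) *
          ((∏ l ∈ Finset.range k, (Dfac B h d (W l)) ^ (d+2)) * (1 + ‖x0‖)) :=
          mul_le_mul_of_nonneg_left ih hD0
      _ = (∏ l ∈ Finset.range k, (Dfac B h d (W l)) ^ (d+2)) * (Dfac B h d (W k)) ^ (d+2)
            * (1 + ‖x0‖) := by ring


lemma one_add_abs_pow_le (x : ℝ) (r : ℕ) : (1 + |x|) ^ r ≤ 2 ^ r * (1 + |x| ^ r) := by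
  have hx : 0 ≤ |x| := abs_nonneg x
  have h2r : (0:ℝ) < 2 ^ r := by positivity
  rcases le_total |x| 1 with hle | hle
  · have h1 : (1 + |x|) ^ r ≤ 2 ^ r := pow_le_pow_left₀ (by linarith) (by linarith) r
    have h2 : (0:ℝ) ≤ |x| ^ r := by positivity
    nlinarith
  · have h1 : (1 + |x|) ^ r ≤ (2 * |x|) ^ r := pow_le_pow_left₀ (by linarith) (by linarith) r
    have h2 : (2 * |x|) ^ r = 2 ^ r * |x| ^ r := mul_pow 2 |x| r
    nlinarith


lemma integrable_one_add_abs_pow_gaussian {v : ℝ≥0} (hv : v ≠ 0) (r : ℕ) :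
    Integrable (fun x : ℝ => (1 + |x|) ^ r) (gaussianReal 0 v) := by
  rw [gaussianReal_of_var_ne_zero 0 hv]
  rw [integrable_withDensity_iff (measurable_gaussianPDF 0 v)
    (Filter.Eventually.of_forall fun _ => ENNReal.ofReal_lt_top)]
  have hv0 : (0:ℝ) < (v:ℝ) := by positivity
  set b : ℝ := (2 * (v:ℝ))⁻¹ with hbdef
  have hb : (0:ℝ) < b := by positivity
  set c : ℝ := (Real.sqrt (2 * π * v))⁻¹ with hcdef
  have hc : (0:ℝ) ≤ c := by positivity
  have hInt1 : Integrable (fun x : ℝ => Real.exp (-b * x ^ 2)) := integrable_exp_neg_mul_sq hb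
  have hInt2 : Integrable (fun x : ℝ => (x ^ 2) ^ r * Real.exp (-b * x ^ 2)) := by
    have h := integrable_rpow_mul_exp_neg_mul_sq hb (s := ((2*r : ℕ) : ℝ))
      (by exact_mod_cast neg_one_lt_zero.trans_le (Nat.cast_nonneg (2*r)))
    have heq : (fun x : ℝ => x ^ ((2*r : ℕ) : ℝ) * Real.exp (-b * x ^ 2))
        = fun x : ℝ => (x ^ 2) ^ r * Real.exp (-b * x ^ 2) := by
      funext x; rw [Real.rpow_natCast, pow_mul]
    rwa [heq] at h
  refine Integrable.mono' ((((hInt1.const_mul 2).add hInt2).const_mul (c * 2 ^ r))) ?_ ?_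
  · refine AEStronglyMeasurable.mul ?_ ?_
    · exact ((measurable_abs.const_add 1).pow_const r).aestronglyMeasurable
    · exact (measurable_gaussianPDF 0 v).ennreal_toReal.aestronglyMeasurable
  · refine Filter.Eventually.of_forall fun x => ?_
    have hpdf : ((gaussianPDF 0 v x).toReal) = gaussianPDFReal 0 v x :=
      ENNReal.toReal_ofReal (gaussianPDFReal_nonneg 0 v x)
    have hpdfval : gaussianPDFReal 0 v x = c * Real.exp (-b * x ^ 2) := by
      rw [gaussianPDFReal, hcdef, hbdef]
      congr 1
      rw [sub_zero]
      congr 1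
      field_simp
    have hE : (0:ℝ) < Real.exp (-b * x ^ 2) := Real.exp_pos _
    have key := one_add_abs_pow_le x r
    have habs : |x| ^ r ≤ 1 + (x ^ 2) ^ r := by
      rcases le_total |x| 1 with hle | hle
      · have := pow_le_one₀ (abs_nonneg x) hle (n := r)
        have h0 : (0:ℝ) ≤ (x ^ 2) ^ r := by positivity
        linarith
      · have h1 : |x| ^ r ≤ |x| ^ (2 * r) :=
          pow_le_pow_right₀ hle (by omega)
        have h2 : |x| ^ (2 * r) = (x ^ 2) ^ r := by
          rw [pow_mul, sq_abs]
        have h0 : (0:ℝ) ≤ (x ^ 2) ^ r := by positivity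
        linarith
    have hkey2 : (1 + |x|) ^ r ≤ 2 ^ r * (2 + (x ^ 2) ^ r) := by
      refine key.trans ?_
      have : (1 + |x| ^ r) ≤ 2 + (x ^ 2) ^ r := by linarith
      exact mul_le_mul_of_nonneg_left this (by positivity)
    calc ‖(1 + |x|) ^ r * (gaussianPDF 0 v x).toReal‖
        = (1 + |x|) ^ r * (c * Real.exp (-b * x ^ 2)) := by
          rw [Real.norm_eq_abs, hpdf, hpdfval, abs_of_nonneg (by positivity)]
      _ ≤ (2 ^ r * (2 + (x ^ 2) ^ r)) * (c * Real.exp (-b * x ^ 2)) := by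
          exact mul_le_mul_of_nonneg_right hkey2 (by positivity)
      _ = c * 2 ^ r * (2 * Real.exp (-b * x ^ 2) + (x ^ 2) ^ r * Real.exp (-b * x ^ 2)) := by
          ring


lemma integrable_prod_allpow {Ω : Type} [MeasurableSpace Ω] {P : Measure Ω}
    [IsProbabilityMeasure P] {ι : Type*} (s : Finset ι) (g : ι → Ω → ℝ)
    (hmeas : ∀ i, Measurable (g i)) (hnn : ∀ i ω, 0 ≤ g i ω)
    (hint : ∀ i ∈ s, ∀ m : ℕ, Integrable (fun ω => g i ω ^ m) P) :
    ∀ m : ℕ, Integrable (fun ω => (∏ i ∈ s, g i ω) ^ m) P := by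
  classical
  induction s using Finset.induction_on with
  | empty => intro m; simpa using integrable_const (1:ℝ)
  | @insert a s' ha ih =>
    intro m
    have hga := hint a (Finset.mem_insert_self a s')
    have ihs := ih (fun i hi => hint i (Finset.mem_insert_of_mem hi))
    refine Integrable.mono' ((hga (2*m)).add (ihs (2*m))) ?_ ?_
    · exact ((Finset.measurable_prod _ (fun i _ => hmeas i)).pow_const m).aestronglyMeasurable
    · refine Filter.Eventually.of_forall fun ω => ?_
      rw [Finset.prod_insert ha, mul_pow]
      have hu : (0:ℝ) ≤ g a ω ^ m := pow_nonneg (hnn a ω) m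
      have hv : (0:ℝ) ≤ (∏ i ∈ s', g i ω) ^ m :=
        pow_nonneg (Finset.prod_nonneg fun i _ => hnn i ω) m
      have e1 : g a ω ^ (2*m) = (g a ω ^ m) ^ 2 := by rw [← pow_mul, mul_comm]
      have e2 : (∏ i ∈ s', g i ω) ^ (2*m) = ((∏ i ∈ s', g i ω) ^ m) ^ 2 := by
        rw [← pow_mul, mul_comm]
      simp only [Pi.add_apply]
      rw [Real.norm_eq_abs, abs_of_nonneg (mul_nonneg hu hv), e1, e2]
      nlinarith [sq_nonneg (g a ω ^ m - (∏ i ∈ s', g i ω) ^ m)]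


lemma rk2_cont {n : ℕ} {V : Vec n → Vec n} (hV : Continuous V) :
    Continuous fun p : ℝ × Vec n => rk2 V p.1 p.2 := by
  unfold rk2; fun_prop


lemma rk4_cont {n : ℕ} {V : Vec n → Vec n} (hV : Continuous V) :
    Continuous fun p : ℝ × Vec n => rk4 V p.1 p.2 := by
  unfold rk4; fun_prop


lemma nvSub_meas {n d : ℕ} {Ω : Type} [MeasurableSpace Ω]
    (ψ0 : ℝ → Vec n → Vec n) (ψ : ℕ → ℝ → Vec n → Vec n)
    (hψ0 : Continuous fun p : ℝ × Vec n => ψ0 p.1 p.2)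
    (hψ : ∀ i, 1 ≤ i → i ≤ d → Continuous fun p : ℝ × Vec n => ψ i p.1 p.2)
    (h : ℝ) (wf : ℕ → Ω → ℝ) (hw : ∀ i, Measurable (wf i))
    (sf : Ω → ℝ) (hs : Measurable sf) (xf : Ω → Vec n) (hx : Measurable xf) :
    ∀ j, Measurable fun ω => nvSub d ψ0 ψ h (fun i => wf i ω) (sf ω) (xf ω) j := by
  intro j
  induction j with
  | zero => simpa only [nvSub] using hx
  | succ j ih =>
    by_cases hj0 : j = 0
    · subst hj0
      have heq : (fun ω => nvSub d ψ0 ψ h (fun i => wf i ω) (sf ω) (xf ω) 1)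
          = fun ω => ψ0 (h/2) (xf ω) := by
        funext ω
        conv_lhs => rw [nvSub]
        rw [if_pos rfl]
      rw [heq]
      exact (hψ0.comp (Continuous.prodMk_right (h/2))).measurable.comp hx
    · by_cases hjd : j ≤ d
      · have heq : (fun ω => nvSub d ψ0 ψ h (fun i => wf i ω) (sf ω) (xf ω) (j+1))
            = fun ω => if sf ω = 1
                then ψ j (wf j ω) (nvSub d ψ0 ψ h (fun i => wf i ω) (sf ω) (xf ω) j)
                else ψ (d+1-j) (wf (d+1-j) ω)
                  (nvSub d ψ0 ψ h (fun i => wf i ω) (sf ω) (xf ω) j) := by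
          funext ω
          conv_lhs => rw [nvSub]
          rw [if_neg hj0, if_pos hjd,
            apply_ite (fun F : Vec n → Vec n =>
              F (nvSub d ψ0 ψ h (fun i => wf i ω) (sf ω) (xf ω) j))]
        rw [heq]
        have hset : MeasurableSet {ω | sf ω = 1} := hs (measurableSet_singleton 1)
        refine Measurable.ite hset ?_ ?_
        · exact ((hψ j (Nat.one_le_iff_ne_zero.mpr hj0) hjd).measurable).comp
            ((hw j).prodMk ih)
        · exact ((hψ (d+1-j) (by omega) (by omega)).measurable).comp
            ((hw (d+1-j)).prodMk ih)
      · have heq : (fun ω => nvSub d ψ0 ψ h (fun i => wf i ω) (sf ω) (xf ω) (j+1))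
            = fun ω => ψ0 (h/2) (nvSub d ψ0 ψ h (fun i => wf i ω) (sf ω) (xf ω) j) := by
          funext ω
          conv_lhs => rw [nvSub]
          rw [if_neg hj0, if_neg hjd]
        rw [heq]
        exact (hψ0.measurable).comp (measurable_const.prodMk ih)


lemma nvGrid_meas {n d : ℕ} {Ω : Type} [MeasurableSpace Ω]
    (ψ0 : ℝ → Vec n → Vec n) (ψ : ℕ → ℝ → Vec n → Vec n)
    (hψ0 : Continuous fun p : ℝ × Vec n => ψ0 p.1 p.2)
    (hψ : ∀ i, 1 ≤ i → i ≤ d → Continuous fun p : ℝ × Vec n => ψ i p.1 p.2)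
    (h : ℝ) (W : ℕ → ℕ → Ω → ℝ) (hW : ∀ l i, Measurable (W l i))
    (sf : ℕ → Ω → ℝ) (hs : ∀ l, Measurable (sf l)) (x0 : Vec n) :
    ∀ k, Measurable fun ω => nvGrid d ψ0 ψ h (fun l i => W l i ω) (fun l => sf l ω) x0 k := by
  intro k
  induction k with
  | zero => simpa only [nvGrid] using measurable_const
  | succ k ih =>
    have heq : (fun ω => nvGrid d ψ0 ψ h (fun l i => W l i ω) (fun l => sf l ω) x0 (k+1))
        = fun ω => nvSub d ψ0 ψ h (fun i => W k i ω) (sf k ω)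
            (nvGrid d ψ0 ψ h (fun l i => W l i ω) (fun l => sf l ω) x0 k) (d+2) := by
      funext ω; conv_lhs => rw [nvGrid]
    rw [heq]
    -- need a version of nvSub_meas with varying x measurable
    exact nvSub_meas ψ0 ψ hψ0 hψ h (fun i => W k i) (hW k) (sf k) (hs k) _ ih (d+2)


/-- the Runge–Kutta discretized Ninomiya–Victoir scheme (RK2 for
the drift, RK4 for the Brownian fields) has finite moments of all orders at
every intermediate value. -/
theorem nv_rk_finite_moments {n d : ℕ} (hn : 0 < n) (hd : 0 < d)
    (T : ℝ) (hT : 0 < T)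
    (σ : ℕ → Vec n → Vec n)
    (hσLip : ∀ j ≤ d, ∃ L : NNReal, LipschitzWith L (σ j)) :
    ∀ p : ℕ, 1 ≤ p →
      ∀ N : ℕ, 0 < N → ∀ x0 : Vec n,
      ∀ (Ω : Type) [MeasurableSpace Ω] (P : Measure Ω), IsProbabilityMeasure P →
      ∀ (W : ℕ → ℕ → Ω → ℝ) (ηb : ℕ → Ω → ℝ),
        (∀ k j, Measurable (W k j)) →
        (∀ k, Measurable (ηb k)) →
        (∀ k, k < N → ∀ j, 1 ≤ j → j ≤ d →
          Measure.map (W k j) P = gaussianReal 0 (Real.toNNReal (T / N))) →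
        (∀ k, k < N → Measure.map (ηb k) P = radMeasure) →
        (∀ k ω, ηb k ω = 1 ∨ ηb k ω = -1) →
        iIndepFun (m := fun _ => (inferInstance : MeasurableSpace ℝ))
          (Sum.elim (fun pr : Fin N × Fin d => W (pr.1 : ℕ) ((pr.2 : ℕ) + 1))
            (fun k : Fin N => ηb (k : ℕ))) P →
        ∀ k, k < N → ∀ j, 1 ≤ j → j ≤ d + 2 →
          Integrable (fun ω =>
            ‖nvSub d (rk2 (σ 0)) (fun i => rk4 (σ i)) (T / N) (fun i => W k i ω) (ηb k ω)
              (nvGrid d (rk2 (σ 0)) (fun i => rk4 (σ i)) (T / N)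
                (fun l i => W l i ω) (fun l => ηb l ω) x0 k) j‖ ^ (2 * p)) P := by
  classical
  intro p hp N hN x0 Ω _ P hP W ηb hWmeas hηmeas hWlaw hηlaw hηval hindep k hk j hj1 hj2
  -- linear growth constant
  choose L hL using hσLip
  set B : ℝ := 1 + ∑ i ∈ Finset.range (d+1),
      ((if hi : i ≤ d then (L i hi : ℝ) else 0) + ‖σ i 0‖) with hBdef
  have hterm_nonneg : ∀ i ∈ Finset.range (d+1),
      (0:ℝ) ≤ (if hi : i ≤ d then (L i hi : ℝ) else 0) + ‖σ i 0‖ := by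
    intro i _
    have h1 : (0:ℝ) ≤ (if hi : i ≤ d then (L i hi : ℝ) else 0) := by
      split_ifs with hi
      · exact (L i hi).coe_nonneg
      · exact le_rfl
    have h2 : (0:ℝ) ≤ ‖σ i 0‖ := norm_nonneg _
    linarith
  have hB : 1 ≤ B := by
    rw [hBdef]
    have := Finset.sum_nonneg hterm_nonneg
    linarith
  have hgrow : ∀ i, i ≤ d → ∀ y : Vec n, ‖σ i y‖ ≤ B * (1 + ‖y‖) := by
    intro i hi y
    have hlip := hL i hi
    have h1 : dist (σ i y) (σ i 0) ≤ (L i hi : ℝ) * dist y 0 := hlip.dist_le_mul y 0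
    rw [dist_eq_norm, dist_eq_norm, sub_zero] at h1
    have h2 : ‖σ i y‖ ≤ ‖σ i 0‖ + (L i hi : ℝ) * ‖y‖ := by
      have := norm_sub_norm_le (σ i y) (σ i 0)
      linarith
    have hCle : (if hi' : i ≤ d then (L i hi' : ℝ) else 0) + ‖σ i 0‖ ≤ B := by
      rw [hBdef]
      have hmem : i ∈ Finset.range (d+1) := Finset.mem_range.mpr (by omega)
      have := Finset.single_le_sum hterm_nonneg hmem
      linarith
    rw [dif_pos hi] at hCle
    have hL0 : (0:ℝ) ≤ (L i hi : ℝ) := (L i hi).coe_nonneg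
    have hy0 : (0:ℝ) ≤ ‖y‖ := norm_nonneg y
    have hs0 : (0:ℝ) ≤ ‖σ i 0‖ := norm_nonneg _
    nlinarith
  -- continuity data
  have hcont : ∀ i, i ≤ d → Continuous (σ i) := fun i hi => (hL i hi).continuous
  have hψ0 : Continuous fun pr : ℝ × Vec n => rk2 (σ 0) pr.1 pr.2 :=
    rk2_cont (hcont 0 (Nat.zero_le d))
  have hψ : ∀ i, 1 ≤ i → i ≤ d →
      Continuous fun pr : ℝ × Vec n => rk4 (σ i) pr.1 pr.2 :=
    fun i _ hi => rk4_cont (hcont i hi)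
  -- measurability of the target
  have hXk : Measurable fun ω => nvGrid d (rk2 (σ 0)) (fun i => rk4 (σ i)) (T / N)
      (fun l i => W l i ω) (fun l => ηb l ω) x0 k :=
    nvGrid_meas _ _ hψ0 hψ (T / N) W hWmeas ηb hηmeas x0 k
  have hF : Measurable fun ω =>
      nvSub d (rk2 (σ 0)) (fun i => rk4 (σ i)) (T / N) (fun i => W k i ω) (ηb k ω)
        (nvGrid d (rk2 (σ 0)) (fun i => rk4 (σ i)) (T / N)
          (fun l i => W l i ω) (fun l => ηb l ω) x0 k) j :=
    nvSub_meas _ _ hψ0 hψ (T / N) (fun i => W k i) (hWmeas k) (ηb k) (hηmeas k) _ hXk j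
  -- variance positivity
  have hTN : (0:ℝ) < T / N := div_pos hT (by exact_mod_cast hN)
  have hv : Real.toNNReal (T / N) ≠ 0 := (Real.toNNReal_pos.mpr hTN).ne'
  -- dominating function
  set M : ℕ := 4 * ((d + 2) * (2 * p)) with hMdef
  set c : ℝ := B * (1 + |T / N|) with hcdef
  have hc1 : 1 ≤ c := by
    rw [hcdef]; nlinarith [abs_nonneg (T / N)]
  have hc0 : 0 ≤ c := by linarith
  set sfin : Finset (ℕ × ℕ) := Finset.range (k+1) ×ˢ Finset.Icc 1 d with hsfin
  set g : ℕ × ℕ → Ω → ℝ := fun q ω => (c * (1 + |W q.1 q.2 ω|)) ^ M with hgdef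
  have hgmeas : ∀ q, Measurable (g q) := fun q =>
    (((hWmeas q.1 q.2).abs.const_add 1).const_mul c).pow_const M
  have hgnn : ∀ q ω, 0 ≤ g q ω := fun q ω =>
    pow_nonneg (mul_nonneg hc0 (by positivity)) M
  have hgint : ∀ q ∈ sfin, ∀ m : ℕ, Integrable (fun ω => g q ω ^ m) P := by
    rintro ⟨l, i⟩ hq m
    rw [hsfin, Finset.mem_product] at hq
    obtain ⟨hl, hi⟩ := hq
    rw [Finset.mem_range] at hl
    rw [Finset.mem_Icc] at hi
    have hlN : l < N := by omega
    have hlaw := hWlaw l hlN i hi.1 hi.2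
    have hbase : Integrable (fun ω => (1 + |W l i ω|) ^ (M * m)) P := by
      have hAESM : AEStronglyMeasurable (fun x : ℝ => (1 + |x|) ^ (M * m))
          (Measure.map (W l i) P) :=
        ((measurable_abs.const_add 1).pow_const _).aestronglyMeasurable
      have h1 : Integrable (fun x : ℝ => (1 + |x|) ^ (M * m)) (Measure.map (W l i) P) := by
        rw [hlaw]; exact integrable_one_add_abs_pow_gaussian hv (M * m)
      exact (integrable_map_measure hAESM (hWmeas l i).aemeasurable).mp h1
    have heq : (fun ω => g (l, i) ω ^ m)
        = fun ω => c ^ (M * m) * (1 + |W l i ω|) ^ (M * m) := by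
      funext ω
      rw [hgdef]
      simp only
      rw [← pow_mul, mul_pow]
    rw [heq]
    exact hbase.const_mul _
  have hIntDom : Integrable (fun ω => (1 + ‖x0‖) ^ (2 * p) * ∏ q ∈ sfin, g q ω) P := by
    have h1 := (integrable_prod_allpow sfin g hgmeas hgnn hgint 1).const_mul
      ((1 + ‖x0‖) ^ (2 * p))
    have heqf : (fun ω => (1 + ‖x0‖) ^ (2 * p) * (∏ q ∈ sfin, g q ω) ^ 1)
        = fun ω => (1 + ‖x0‖) ^ (2 * p) * ∏ q ∈ sfin, g q ω := by
      funext ω; rw [pow_one]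
    rwa [heqf] at h1
  -- pointwise bound
  refine Integrable.mono' hIntDom (hF.norm.pow_const (2 * p)).aestronglyMeasurable ?_
  refine Filter.Eventually.of_forall fun ω => ?_
  have hD1 : ∀ l : ℕ, 1 ≤ Dfac B (T / N) d (fun i => W l i ω) := fun l =>
    one_le_Dfac hB d _
  have hD0 : ∀ l : ℕ, 0 ≤ Dfac B (T / N) d (fun i => W l i ω) := fun l => by
    linarith [hD1 l]
  set Y := nvSub d (rk2 (σ 0)) (fun i => rk4 (σ i)) (T / N) (fun i => W k i ω) (ηb k ω)
      (nvGrid d (rk2 (σ 0)) (fun i => rk4 (σ i)) (T / N)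
        (fun l i => W l i ω) (fun l => ηb l ω) x0 k) j with hYdef
  have hb1 : 1 + ‖Y‖ ≤ Dfac B (T / N) d (fun i => W k i ω) ^ j *
      (1 + ‖nvGrid d (rk2 (σ 0)) (fun i => rk4 (σ i)) (T / N)
        (fun l i => W l i ω) (fun l => ηb l ω) x0 k‖) := by
    rw [hYdef]
    exact nvSub_bound σ hB hgrow (T / N) (fun i => W k i ω) (ηb k ω) _ j hj2
  have hb2 : Dfac B (T / N) d (fun i => W k i ω) ^ j
      ≤ Dfac B (T / N) d (fun i => W k i ω) ^ (d + 2) :=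
    pow_le_pow_right₀ (hD1 k) hj2
  have hb3 := nvGrid_bound σ hB hgrow (T / N) (fun l i => W l i ω) (fun l => ηb l ω) x0 k
  have hXnn : (0:ℝ) ≤ 1 + ‖nvGrid d (rk2 (σ 0)) (fun i => rk4 (σ i)) (T / N)
      (fun l i => W l i ω) (fun l => ηb l ω) x0 k‖ := by positivity
  have hb4 : 1 + ‖Y‖ ≤
      (∏ l ∈ Finset.range (k+1), Dfac B (T / N) d (fun i => W l i ω) ^ (d + 2)) *
        (1 + ‖x0‖) := by
    rw [Finset.prod_range_succ]
    calc 1 + ‖Y‖ ≤ Dfac B (T / N) d (fun i => W k i ω) ^ j *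
        (1 + ‖nvGrid d (rk2 (σ 0)) (fun i => rk4 (σ i)) (T / N)
          (fun l i => W l i ω) (fun l => ηb l ω) x0 k‖) := hb1
      _ ≤ Dfac B (T / N) d (fun i => W k i ω) ^ (d + 2) *
          ((∏ l ∈ Finset.range k, Dfac B (T / N) d (fun i => W l i ω) ^ (d + 2)) *
            (1 + ‖x0‖)) := by
          exact mul_le_mul hb2 hb3 hXnn (pow_nonneg (hD0 k) _)
      _ = (∏ l ∈ Finset.range k, Dfac B (T / N) d (fun i => W l i ω) ^ (d + 2)) *
            Dfac B (T / N) d (fun i => W k i ω) ^ (d + 2) * (1 + ‖x0‖) := by ring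
  -- raise to the power 2p
  have hYnn : (0:ℝ) ≤ ‖Y‖ := norm_nonneg _
  have hstep1 : ‖Y‖ ^ (2 * p) ≤ (1 + ‖Y‖) ^ (2 * p) :=
    pow_le_pow_left₀ hYnn (by linarith) _
  have hstep2 : (1 + ‖Y‖) ^ (2 * p) ≤
      ((∏ l ∈ Finset.range (k+1), Dfac B (T / N) d (fun i => W l i ω) ^ (d + 2)) *
        (1 + ‖x0‖)) ^ (2 * p) :=
    pow_le_pow_left₀ (by positivity) hb4 _
  -- expand the right-hand side
  have hDfac_le : ∀ l : ℕ, Dfac B (T / N) d (fun i => W l i ω) ^ ((d + 2) * (2 * p))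
      ≤ ∏ i ∈ Finset.Icc 1 d, g (l, i) ω := by
    intro l
    have hprod_eq : ∏ i ∈ Finset.Icc 1 d, (c * (1 + |W l i ω|)) ^ 4
        = (c ^ 4) ^ d * ∏ i ∈ Finset.Icc 1 d, (1 + |W l i ω|) ^ 4 := by
      have : ∀ i ∈ Finset.Icc 1 d, (c * (1 + |W l i ω|)) ^ 4
          = c ^ 4 * (1 + |W l i ω|) ^ 4 := fun i _ => mul_pow c _ 4
      rw [Finset.prod_congr rfl this, Finset.prod_mul_distrib, Finset.prod_const,
        Nat.card_Icc]
      simp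
    have h1le : 1 ≤ c ^ 4 := one_le_pow₀ hc1
    have hD_le : Dfac B (T / N) d (fun i => W l i ω)
        ≤ ∏ i ∈ Finset.Icc 1 d, (c * (1 + |W l i ω|)) ^ 4 := by
      rw [hprod_eq, Dfac, ← hcdef]
      refine mul_le_mul_of_nonneg_right ?_ ?_
      · exact le_self_pow₀ h1le (by omega)
      · exact Finset.prod_nonneg fun i _ => by positivity
    calc Dfac B (T / N) d (fun i => W l i ω) ^ ((d + 2) * (2 * p))
        ≤ (∏ i ∈ Finset.Icc 1 d, (c * (1 + |W l i ω|)) ^ 4) ^ ((d + 2) * (2 * p)) :=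
          pow_le_pow_left₀ (hD0 l) hD_le _
      _ = ∏ i ∈ Finset.Icc 1 d, g (l, i) ω := by
          rw [← Finset.prod_pow]
          refine Finset.prod_congr rfl fun i _ => ?_
          rw [hgdef]
          simp only
          rw [← pow_mul, hMdef]
  have hexpand : ((∏ l ∈ Finset.range (k+1), Dfac B (T / N) d (fun i => W l i ω) ^ (d + 2)) *
        (1 + ‖x0‖)) ^ (2 * p)
      ≤ (1 + ‖x0‖) ^ (2 * p) * ∏ q ∈ sfin, g q ω := by
    rw [mul_pow, ← Finset.prod_pow]
    have heq2 : ∀ l ∈ Finset.range (k+1),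
        (Dfac B (T / N) d (fun i => W l i ω) ^ (d + 2)) ^ (2 * p)
        = Dfac B (T / N) d (fun i => W l i ω) ^ ((d + 2) * (2 * p)) := fun l _ =>
      (pow_mul _ _ _).symm
    rw [Finset.prod_congr rfl heq2]
    have hprod_le : ∏ l ∈ Finset.range (k+1),
        Dfac B (T / N) d (fun i => W l i ω) ^ ((d + 2) * (2 * p))
        ≤ ∏ l ∈ Finset.range (k+1), ∏ i ∈ Finset.Icc 1 d, g (l, i) ω := by
      refine Finset.prod_le_prod (fun l _ => pow_nonneg (hD0 l) _) fun l _ => hDfac_le l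
    have hps : ∏ l ∈ Finset.range (k+1), ∏ i ∈ Finset.Icc 1 d, g (l, i) ω
        = ∏ q ∈ sfin, g q ω := by
      rw [hsfin, Finset.prod_product]
    rw [mul_comm]
    refine mul_le_mul_of_nonneg_left ?_ (by positivity)
    rw [← hps]
    exact hprod_le
  -- conclude
  have hfinal : ‖Y‖ ^ (2 * p) ≤ (1 + ‖x0‖) ^ (2 * p) * ∏ q ∈ sfin, g q ω :=
    hstep1.trans (hstep2.trans hexpand)
  calc ‖‖Y‖ ^ (2 * p)‖ = ‖Y‖ ^ (2 * p) := by
        rw [Real.norm_eq_abs, abs_of_nonneg (by positivity)]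
    _ ≤ (1 + ‖x0‖) ^ (2 * p) * ∏ q ∈ sfin, g q ω := hfinal
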